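/- Let A : ℕ → ℕ → k be an ℕ×ℕ matrix of rank at least n, i.e. some n×n submatrix of A is invertible. Then for every invertible matrix M ∈ Matrix (Fin n) (Fin n) k there exist σ ∈ Sym and g ∈ GL such that ((σ • A) • g) i j = M i j for all i, j ∈ Fin n. In particular, the Sym × GL-orbit of A projects dominantly onto the space of top-left n×n blocks. -/

import Mathlib

noncomputable section

/-- `g : ℕ → ℕ → k` is a finitary invertible `ℕ×ℕ` matrix. -/
def IsFinGL {k : Type*} [Field k] (g : ℕ → ℕ → k) : Prop :=
  ∃ N : ℕ, (∀ i j : ℕ, N ≤ i ∨ N ≤ j → g i j = if i = j then 1 else 0) ∧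
    IsUnit (Matrix.of fun i j : Fin N => g i.1 j.1)

/-- A permutation of `ℕ` with finite support. -/
def IsFinPerm (σ : Equiv.Perm ℕ) : Prop := ∃ N : ℕ, ∀ i : ℕ, N ≤ i → σ i = i

/-- The action of `Sym` on `ℕ×ℕ` matrices by permuting rows. -/
def rowPerm {k : Type*} [Field k] (σ : Equiv.Perm ℕ) (A : ℕ → ℕ → k) : ℕ → ℕ → k :=
  fun i j => A (σ⁻¹ i) j

/-- The action of `GL` on `ℕ×ℕ` matrices by right multiplication on columns:
`(A • g) i j = Σ_t A i t * g t j`, a finite sum since `g` is finitary. -/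
def colMul {k : Type*} [Field k] (A : ℕ → ℕ → k) (g : ℕ → ℕ → k) : ℕ → ℕ → k :=
  fun i j => ∑ᶠ t : ℕ, A i t * g t j

/-- A subset of the space of `ℕ×ℕ` matrices is Zariski closed if it is the
common zero locus of a set of polynomials in the entries. -/
def IsZClosedMat {k : Type*} [Field k] (X : Set (ℕ → ℕ → k)) : Prop :=
  ∃ S : Set (MvPolynomial (ℕ × ℕ) k),
    X = {A | ∀ f ∈ S, MvPolynomial.eval (fun p : ℕ × ℕ => A p.1 p.2) f = 0}

lemma exists_finPerm {k : ℕ} (f : Fin k → ℕ) (hf : Function.Injective f) :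
    ∃ (τ : Equiv.Perm ℕ) (N : ℕ), k ≤ N ∧ (∀ i, N ≤ i → τ i = i) ∧
      ∀ i : Fin k, τ (f i) = i := by
  classical
  set N : ℕ := max k ((Finset.univ.sup f) + 1) with hN
  have hkN : k ≤ N := le_max_left _ _
  have hfN : ∀ i : Fin k, f i < N :=
    fun i => lt_of_lt_of_le (Nat.lt_succ_of_le (Finset.le_sup (Finset.mem_univ i)))
      (le_max_right _ _)
  set f' : Fin k → Fin N := fun i => ⟨f i, hfN i⟩ with hf'
  have hf'inj : Function.Injective f' := fun a b h => hf (congrArg Fin.val h)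
  set e2 : Fin k ≃ {x : Fin N // (x : ℕ) < k} :=
    { toFun := fun i => ⟨⟨i, lt_of_lt_of_le i.2 hkN⟩, i.2⟩
      invFun := fun x => ⟨x.1, x.2⟩
      left_inv := fun i => rfl
      right_inv := fun x => rfl } with he2
  set e : {x : Fin N // x ∈ Set.range f'} ≃ {x : Fin N // (x : ℕ) < k} :=
    (Equiv.ofInjective f' hf'inj).symm.trans e2 with he
  set π : Equiv.Perm (Fin N) := e.extendSubtype with hπ
  have hπ1 : ∀ i : Fin k, π (f' i) = ⟨(i : ℕ), lt_of_lt_of_le i.2 hkN⟩ := by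
    intro i
    have := e.extendSubtype_apply_of_mem (f' i) ⟨i, rfl⟩
    rw [hπ, this, he]
    simp [he2]
  set τ : Equiv.Perm ℕ := π.extendDomain (Fin.equivSubtype (n := N)) with hτ
  refine ⟨τ, N, hkN, ?_, ?_⟩
  · intro i hi
    exact Equiv.Perm.extendDomain_apply_not_subtype _ _ (by omega)
  · intro i
    have h2 := Equiv.Perm.extendDomain_apply_image π (Fin.equivSubtype (n := N)) (f' i)
    rw [hπ1 i] at h2
    exact h2

/-- If an `ℕ×ℕ` matrix `A` has rank at least `n` (some `n×n` submatrix is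
invertible), then the `Sym × GL`-orbit of `A` projects dominantly onto the
space of top-left `n×n` blocks: every invertible `n×n` matrix `M` arises as the
top-left `n×n` block of `(σ • A) • g` for some `σ ∈ Sym` and `g ∈ GL`. -/
theorem symGL_orbit_dominant_on_topleft_block_of_rank_ge
    {k : Type*} [Field k] [IsAlgClosed k] [CharZero k]
    (n : ℕ) (A : ℕ → ℕ → k)
    (hrk : ∃ r cc : Fin n → ℕ, Function.Injective r ∧ Function.Injective cc ∧
      IsUnit (Matrix.of fun i j : Fin n => A (r i) (cc j))) :
    ∀ M : Matrix (Fin n) (Fin n) k, IsUnit M →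
      ∃ (σ : Equiv.Perm ℕ) (g : ℕ → ℕ → k), IsFinPerm σ ∧ IsFinGL g ∧
        ∀ i j : Fin n, colMul (rowPerm σ A) g i.1 j.1 = M i j := by
  classical
  intro M hM
  obtain ⟨r, cc, hr, hcc, hB'⟩ := hrk
  obtain ⟨σ, Nσ, hnNσ, hσfix, hσr⟩ := exists_finPerm r hr
  obtain ⟨τ, N, hnN, hτfix, hτc⟩ := exists_finPerm cc hcc
  set B' : Matrix (Fin n) (Fin n) k := Matrix.of fun i j => A (r i) (cc j) with hB'def
  have hB'd : IsUnit B'.det := (Matrix.isUnit_iff_isUnit_det _).mp hB'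
  have hMd : IsUnit M.det := (Matrix.isUnit_iff_isUnit_det _).mp hM
  set C : Matrix (Fin n) (Fin n) k := B'⁻¹ * M with hCdef
  have hCd : IsUnit C.det := by
    rw [hCdef, Matrix.det_mul, Matrix.det_nonsing_inv]
    exact (isUnit_ringInverse.mpr hB'd).mul hMd
  have hB'C : B' * C = M := by
    rw [hCdef, ← Matrix.mul_assoc, Matrix.mul_nonsing_inv _ hB'd, Matrix.one_mul]
  have hCC : C * C⁻¹ = 1 := Matrix.mul_nonsing_inv _ hCd
  set h : ℕ → ℕ → k := fun t j =>
    if ht : t < n ∧ j < n then C ⟨t, ht.1⟩ ⟨j, ht.2⟩ else (if t = j then 1 else 0) with hhdef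
  set h2 : ℕ → ℕ → k := fun t j =>
    if ht : t < n ∧ j < n then C⁻¹ ⟨t, ht.1⟩ ⟨j, ht.2⟩ else (if t = j then 1 else 0) with hh2def
  set g : ℕ → ℕ → k := fun x j => h (τ x) j with hgdef
  -- τ maps [0,N) into [0,N)
  have hτlt : ∀ x, x < N → τ x < N := by
    intro x hx
    by_contra hge
    have h1 : τ (τ x) = τ x := hτfix _ (le_of_not_gt hge)
    have := τ.injective h1
    omega
  -- key computation: h * h2 = 1 on range N
  have hkey : ∀ a b : ℕ, a < N → b < N →
      (∑ t ∈ Finset.range N, h a t * h2 t b) = if a = b then 1 else 0 := by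
    intro a b ha hb
    by_cases han : a < n
    · by_cases hbn : b < n
      · have hzero : ∀ t ∈ Finset.range N, t ∉ Finset.range n → h a t * h2 t b = 0 := by
          intro t _ ht
          simp only [Finset.mem_range, not_lt] at ht
          have : h a t = 0 := by
            simp only [hhdef]
            rw [dif_neg (by omega), if_neg (by omega)]
          rw [this, zero_mul]
        rw [← Finset.sum_subset (Finset.range_subset_range.2 hnN) hzero]
        have : ∀ t ∈ Finset.range n, h a t * h2 t b =
            (fun t : ℕ => if ht : t < n then C ⟨a, han⟩ ⟨t, ht⟩ * C⁻¹ ⟨t, ht⟩ ⟨b, hbn⟩ else 0) t := by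
          intro t ht
          simp only [Finset.mem_range] at ht
          simp only [hhdef, hh2def]
          rw [dif_pos ⟨han, ht⟩, dif_pos ⟨ht, hbn⟩, dif_pos ht]
        rw [Finset.sum_congr rfl this, ← Fin.sum_univ_eq_sum_range]
        have := congrFun (congrFun hCC ⟨a, han⟩) ⟨b, hbn⟩
        rw [Matrix.mul_apply] at this
        calc (∑ t : Fin n, (fun t : ℕ => if ht : t < n then
                C ⟨a, han⟩ ⟨t, ht⟩ * C⁻¹ ⟨t, ht⟩ ⟨b, hbn⟩ else 0) (t : ℕ))
            = ∑ t : Fin n, C ⟨a, han⟩ t * C⁻¹ t ⟨b, hbn⟩ := by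
              refine Finset.sum_congr rfl fun t _ => ?_
              simp [dif_pos t.2]
          _ = (1 : Matrix (Fin n) (Fin n) k) ⟨a, han⟩ ⟨b, hbn⟩ := this
          _ = if a = b then 1 else 0 := by
              rw [Matrix.one_apply]
              simp [Fin.ext_iff]
      · rw [if_neg (by omega)]
        refine Finset.sum_eq_zero fun t _ => ?_
        by_cases htn : t < n
        · have : h2 t b = 0 := by
            simp only [hh2def]
            rw [dif_neg (by omega), if_neg (by omega)]
          rw [this, mul_zero]
        · have : h a t = 0 := by
            simp only [hhdef]
            rw [dif_neg (by omega), if_neg (by omega)]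
          rw [this, zero_mul]
    · -- a ≥ n: h a t = δ_{a t}
      have hsum : (∑ t ∈ Finset.range N, h a t * h2 t b) = h2 a b := by
        rw [Finset.sum_eq_single a]
        · simp only [hhdef]
          rw [dif_neg (by omega)]
          simp
        · intro t _ hta
          have : h a t = 0 := by
            simp only [hhdef]
            rw [dif_neg (by omega), if_neg (fun hh => hta hh.symm)]
          rw [this, zero_mul]
        · intro hmem
          exact absurd (Finset.mem_range.2 ha) hmem
      rw [hsum, hh2def]
      simp only
      rw [dif_neg (by omega)]
  refine ⟨σ, g, ⟨Nσ, hσfix⟩, ⟨N, ?_, ?_⟩, ?_⟩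
  · -- g is identity outside [0,N)
    intro i j hij
    rcases hij with hi | hj
    · have hti : τ i = i := hτfix i hi
      simp only [hgdef, hhdef, hti]
      rw [dif_neg (by omega)]
    · by_cases hi : i < N
      · have := hτlt i hi
        simp only [hgdef, hhdef]
        rw [dif_neg (by omega), if_neg (by omega), if_neg (by omega)]
      · have hti : τ i = i := hτfix i (le_of_not_gt hi)
        simp only [hgdef, hhdef, hti]
        rw [dif_neg (by omega)]
  · -- top N×N block of g is invertible
    refine (Matrix.isUnit_iff_isUnit_det _).mpr <| Matrix.isUnit_det_of_right_inverse
      (B := Matrix.of fun i j : Fin N => h2 i.1 (τ j.1)) ?_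
    ext i j
    have e1 : (∑ t : Fin N, g i.1 t.1 * h2 t.1 (τ j.1))
        = ∑ t ∈ Finset.range N, h (τ i.1) t * h2 t (τ j.1) :=
      Fin.sum_univ_eq_sum_range (fun t => h (τ i.1) t * h2 t (τ j.1)) N
    rw [Matrix.mul_apply, Matrix.one_apply]
    show (∑ t : Fin N, g i.1 t.1 * h2 t.1 (τ j.1)) = _
    rw [e1, hkey _ _ (hτlt _ i.2) (hτlt _ j.2)]
    have : (τ i.1 = τ j.1) ↔ (i = j) := by
      constructor
      · intro hh; exact Fin.ext (τ.injective hh)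
      · intro hh; rw [hh]
    simp [this]
  · -- the top-left block equals M
    intro i j
    have hσinv : (σ⁻¹ : Equiv.Perm ℕ) (i : ℕ) = r i := by
      have := hσr i
      rw [← this]
      simp
    have hτinv : ∀ s : Fin n, (τ⁻¹ : Equiv.Perm ℕ) (s : ℕ) = cc s := by
      intro s
      rw [← hτc s]
      simp
    set F : ℕ → k := fun s => rowPerm σ A i.1 ((τ⁻¹ : Equiv.Perm ℕ) s) * h s j.1 with hF
    have hre : (fun t => rowPerm σ A i.1 t * g t j.1) = fun t => F (τ t) := by
      funext t
      simp only [hF, hgdef]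
      rw [show (τ⁻¹ : Equiv.Perm ℕ) (τ t) = t from τ.symm_apply_apply t]
    have hsupp : Function.support F ⊆ ↑(Finset.range n) := by
      intro s hs
      simp only [Finset.coe_range, Set.mem_Iio]
      by_contra hsn
      apply hs
      simp only [hF, hhdef]
      rw [dif_neg (by omega), if_neg (by omega), mul_zero]
    calc colMul (rowPerm σ A) g i.1 j.1
        = ∑ᶠ t : ℕ, F (τ t) := by rw [colMul, hre]
      _ = ∑ᶠ s : ℕ, F s := finsum_comp_equiv τ
      _ = ∑ s ∈ Finset.range n, F s := finsum_eq_sum_of_support_subset F hsupp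
      _ = ∑ s : Fin n, F (s : ℕ) := (Fin.sum_univ_eq_sum_range F n).symm
      _ = ∑ s : Fin n, B' i s * C s j := by
          refine Finset.sum_congr rfl fun s _ => ?_
          simp only [hF, hhdef, rowPerm, hτinv s, hσinv, hB'def]
          rw [dif_pos ⟨s.2, j.2⟩]
          rfl
      _ = (B' * C) i j := (Matrix.mul_apply).symm
      _ = M i j := by rw [hB'C]
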